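/- Let $\theta, \theta_\mu \in C^2[0,1]$ satisfy $\mu\theta'' + \theta(m-\theta) = 0$ and $\mu\theta_\mu'' + (m - 2\theta)\theta_\mu = -\theta''$ on $(0,1)$, with $\theta'(0)=\theta'(1)=\theta_\mu'(0)=\theta_\mu'(1)=0$ and $\theta > 0$. Then $\int_0^1 \theta^2 \theta_\mu\,dx = -\int_0^1 (\theta')^2\,dx$. -/

import Mathlib

open Set

/-- Integrating the Wronskian identity over `[0,1]` with Neumann boundary conditions gives
`∫₀¹ θ² θ_μ = -∫₀¹ (θ')²`. -/
theorem integral_identity (μ : ℝ) (hμ : 0 < μ) (m θ θμ : ℝ → ℝ)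
    (hm : ContinuousOn m (Icc 0 1))
    (hθreg : ContDiffOn ℝ 2 θ (Icc 0 1)) (hθμreg : ContDiffOn ℝ 2 θμ (Icc 0 1))
    (hθpos : ∀ x ∈ Icc (0:ℝ) 1, 0 < θ x)
    (hode : ∀ x ∈ Ioo (0:ℝ) 1,
      μ * derivWithin (derivWithin θ (Icc 0 1)) (Icc 0 1) x + θ x * (m x - θ x) = 0)
    (hodeμ : ∀ x ∈ Ioo (0:ℝ) 1,
      μ * derivWithin (derivWithin θμ (Icc 0 1)) (Icc 0 1) x + (m x - 2 * θ x) * θμ x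
        = -derivWithin (derivWithin θ (Icc 0 1)) (Icc 0 1) x)
    (hbc0 : derivWithin θ (Icc 0 1) 0 = 0) (hbc1 : derivWithin θ (Icc 0 1) 1 = 0)
    (hbcμ0 : derivWithin θμ (Icc 0 1) 0 = 0) (hbcμ1 : derivWithin θμ (Icc 0 1) 1 = 0) :
    ∫ x in (0:ℝ)..1, (θ x) ^ 2 * θμ x
      = -∫ x in (0:ℝ)..1, (derivWithin θ (Icc 0 1) x) ^ 2 := by
  set D : ℝ → ℝ := derivWithin θ (Icc 0 1) with hDdef
  set D2 : ℝ → ℝ := derivWithin D (Icc 0 1) with hD2def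
  set E : ℝ → ℝ := derivWithin θμ (Icc 0 1) with hEdef
  set E2 : ℝ → ℝ := derivWithin E (Icc 0 1) with hE2def
  have hud : UniqueDiffOn ℝ (Icc (0:ℝ) 1) := uniqueDiffOn_Icc one_pos
  have huIcc : uIcc (0:ℝ) 1 = Icc 0 1 := uIcc_of_le (by norm_num)
  have hθc : ContinuousOn θ (Icc (0:ℝ) 1) := hθreg.continuousOn
  have hθμc : ContinuousOn θμ (Icc (0:ℝ) 1) := hθμreg.continuousOn
  have hD1 : ContDiffOn ℝ 1 D (Icc (0:ℝ) 1) := hθreg.derivWithin hud (by norm_num)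
  have hE1 : ContDiffOn ℝ 1 E (Icc (0:ℝ) 1) := hθμreg.derivWithin hud (by norm_num)
  have hDc : ContinuousOn D (Icc (0:ℝ) 1) := hD1.continuousOn
  have hEc : ContinuousOn E (Icc (0:ℝ) 1) := hE1.continuousOn
  have hD2c : ContinuousOn D2 (Icc (0:ℝ) 1) :=
    (hD1.derivWithin hud (m := 0) (by norm_num)).continuousOn
  have hE2c : ContinuousOn E2 (Icc (0:ℝ) 1) :=
    (hE1.derivWithin hud (m := 0) (by norm_num)).continuousOn
  -- pointwise derivatives on the open interval
  have hθd : ∀ x ∈ Ioo (0:ℝ) 1, HasDerivAt θ (D x) x := fun x hx =>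
    ((hθreg.differentiableOn (by norm_num) x
      (Ioo_subset_Icc_self hx)).hasDerivWithinAt).hasDerivAt (Icc_mem_nhds hx.1 hx.2)
  have hθμd : ∀ x ∈ Ioo (0:ℝ) 1, HasDerivAt θμ (E x) x := fun x hx =>
    ((hθμreg.differentiableOn (by norm_num) x
      (Ioo_subset_Icc_self hx)).hasDerivWithinAt).hasDerivAt (Icc_mem_nhds hx.1 hx.2)
  have hDd : ∀ x ∈ Ioo (0:ℝ) 1, HasDerivAt D (D2 x) x := fun x hx =>
    ((hD1.differentiableOn (by norm_num) x
      (Ioo_subset_Icc_self hx)).hasDerivWithinAt).hasDerivAt (Icc_mem_nhds hx.1 hx.2)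
  have hEd : ∀ x ∈ Ioo (0:ℝ) 1, HasDerivAt E (E2 x) x := fun x hx =>
    ((hE1.differentiableOn (by norm_num) x
      (Ioo_subset_Icc_self hx)).hasDerivWithinAt).hasDerivAt (Icc_mem_nhds hx.1 hx.2)
  -- integrability
  have intD2θμ : IntervalIntegrable (fun x => D2 x * θμ x - E2 x * θ x)
      MeasureTheory.volume 0 1 := by
    apply ContinuousOn.intervalIntegrable
    rw [huIcc]
    exact (hD2c.mul hθμc).sub (hE2c.mul hθc)
  have intD2θ : IntervalIntegrable (fun x => D2 x * θ x + D x * D x)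
      MeasureTheory.volume 0 1 := by
    apply ContinuousOn.intervalIntegrable
    rw [huIcc]
    exact (hD2c.mul hθc).add (hDc.mul hDc)
  have intDsq : IntervalIntegrable (fun x => D x ^ 2) MeasureTheory.volume 0 1 := by
    apply ContinuousOn.intervalIntegrable
    rw [huIcc]
    exact (hDc.mul hDc).congr (fun x _ => by rw [Pi.mul_apply]; ring)
  have intD2θ' : IntervalIntegrable (fun x => D2 x * θ x) MeasureTheory.volume 0 1 := by
    apply ContinuousOn.intervalIntegrable
    rw [huIcc]
    exact hD2c.mul hθc
  -- FTC A : Wronskian integral vanishes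
  have ftcA : (∫ x in (0:ℝ)..1, (D2 x * θμ x - E2 x * θ x)) = 0 := by
    have := intervalIntegral.integral_eq_sub_of_hasDeriv_right_of_le (f := fun x => D x * θμ x - E x * θ x)
      (f' := fun x => D2 x * θμ x - E2 x * θ x) (by norm_num : (0:ℝ) ≤ 1)
      ((hDc.mul hθμc).sub (hEc.mul hθc))
      (fun x hx => by
        have h := (((hDd x hx).mul (hθμd x hx)).sub ((hEd x hx).mul (hθd x hx)))
        have h' : D2 x * θμ x + D x * E x - (E2 x * θ x + E x * D x)
            = D2 x * θμ x - E2 x * θ x := by ring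
        exact (h' ▸ h).hasDerivWithinAt)
      intD2θμ
    rw [this]
    simp only [hbc0, hbc1, hbcμ0, hbcμ1]
    ring
  -- FTC B : integration by parts for ∫ θ'' θ
  have ftcB : (∫ x in (0:ℝ)..1, (D2 x * θ x + D x * D x)) = 0 := by
    have := intervalIntegral.integral_eq_sub_of_hasDeriv_right_of_le (f := fun x => D x * θ x)
      (f' := fun x => D2 x * θ x + D x * D x) (by norm_num : (0:ℝ) ≤ 1)
      (hDc.mul hθc)
      (fun x hx => ((hDd x hx).mul (hθd x hx)).hasDerivWithinAt)
      intD2θ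
    rw [this]
    simp only [hbc0, hbc1]
    ring
  have hB : (∫ x in (0:ℝ)..1, D2 x * θ x) = -∫ x in (0:ℝ)..1, D x ^ 2 := by
    have intDD : IntervalIntegrable (fun x => D x * D x) MeasureTheory.volume 0 1 := by
      apply ContinuousOn.intervalIntegrable
      rw [huIcc]
      exact hDc.mul hDc
    have hsplit : (∫ x in (0:ℝ)..1, (D2 x * θ x + D x * D x))
        = (∫ x in (0:ℝ)..1, D2 x * θ x) + ∫ x in (0:ℝ)..1, D x * D x :=
      intervalIntegral.integral_add intD2θ' intDD
    have hDsq : (∫ x in (0:ℝ)..1, D x * D x) = ∫ x in (0:ℝ)..1, D x ^ 2 :=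
      intervalIntegral.integral_congr (fun x _ => by ring)
    rw [ftcB] at hsplit
    linarith [hsplit, hDsq]
  -- pointwise identity on the open interval
  have hpt : ∀ x ∈ Ioo (0:ℝ) 1,
      (θ x) ^ 2 * θμ x = D2 x * θ x - μ * (D2 x * θμ x - E2 x * θ x) := by
    intro x hx
    have h1 := hode x hx
    have h2 := hodeμ x hx
    linear_combination θμ x * h1 - θ x * h2
  -- replace the integrand a.e.
  have hcongr : (∫ x in (0:ℝ)..1, (θ x) ^ 2 * θμ x)
      = ∫ x in (0:ℝ)..1, (D2 x * θ x - μ * (D2 x * θμ x - E2 x * θ x)) := by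
    apply intervalIntegral.integral_congr_ae
    have h1 : ∀ᵐ x : ℝ, x ≠ (1:ℝ) :=
      MeasureTheory.compl_mem_ae_iff.mpr (MeasureTheory.measure_singleton 1)
    filter_upwards [h1] with x hx hmem
    rw [uIoc_of_le (by norm_num : (0:ℝ) ≤ 1)] at hmem
    exact hpt x ⟨hmem.1, lt_of_le_of_ne hmem.2 hx⟩
  rw [hcongr]
  rw [intervalIntegral.integral_sub intD2θ' (intD2θμ.const_mul μ)]
  rw [intervalIntegral.integral_const_mul, ftcA, hB]
  ring
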